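/- arXiv:2012.08363 — 2 statements merged into one kernel-verified Lean document; each statement's English description precedes it below -/
import Mathlib

section
/- Let k ∈ V and let S be a nonzero complex symmetric bilinear form on W satisfying the Lorenz gauge condition S(k, v) = (1/2) g(k,v) · tr_g S for all v ∈ W, and suppose D[k](S) = 0. Then k is null: g(k,k) = 0. (In particular, in dimension 4 the equation S = (1/2) g · tr_g S forces S = 0, so the only nontrivial solutions of D[k](S) = 0 in the Lorenz gauge have null k.) -/
open scoped TensorProduct
open Module

noncomputable section

variable {V : Type} [AddCommGroup V] [Module ℝ V]

/-- The complexification `W = ℂ ⊗ V` of the real vector space `V`. -/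
abbrev Cx (V : Type) [AddCommGroup V] [Module ℝ V] := ℂ ⊗[ℝ] V

/-- The canonical inclusion of `V` into its complexification `W = ℂ ⊗ V`. -/
def ι (v : V) : Cx V := (1 : ℂ) ⊗ₜ[ℝ] v

/-- Complex conjugation `u ↦ ū` on `W = ℂ ⊗ V` induced by the real structure. -/
def conjW : Cx V →ₗ[ℝ] Cx V :=
  TensorProduct.map Complex.conjAe.toLinearMap LinearMap.id

lemma conjW_smul (c : ℂ) (u : Cx V) :
    conjW (c • u) = (starRingEnd ℂ c) • conjW u := by
  induction u using TensorProduct.induction_on with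
  | zero => simp
  | tmul x v =>
      simp [conjW, TensorProduct.smul_tmul', smul_eq_mul, map_mul, TensorProduct.map_tmul]
  | add a b ha hb => simp [smul_add, map_add, ha, hb]

/-- The ℂ-bilinear extension of `g` to `W = ℂ ⊗ V`. -/
def gW (g : LinearMap.BilinForm ℝ V) : LinearMap.BilinForm ℂ (Cx V) :=
  g.baseChange ℂ

/-- The symmetric product `u ⊙ v`, as a complex bilinear form on `W`:
`(u ⊙ v)(a,b) = (1/2) (g(u,a) g(v,b) + g(v,a) g(u,b))`. -/
def sprod (g : LinearMap.BilinForm ℝ V) (u v : Cx V) : LinearMap.BilinForm ℂ (Cx V) :=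
  LinearMap.mk₂ ℂ
    (fun a b => (1 / 2 : ℂ) * (gW g u a * gW g v b + gW g v a * gW g u b))
    (by intro a a' b; simp only [map_add]; ring)
    (by intro c a b; simp only [map_smul, smul_eq_mul]; ring)
    (by intro a b b'; simp only [map_add]; ring)
    (by intro a c b; simp only [map_smul, smul_eq_mul]; ring)

/-- The symmetric product with a fixed vector, as a linear map `b ↦ u ⊙ b`. -/
def sprodL (g : LinearMap.BilinForm ℝ V) (u : Cx V) :
    Cx V →ₗ[ℂ] LinearMap.BilinForm ℂ (Cx V) where
  toFun v := sprod g u v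
  map_add' v v' := by
    refine LinearMap.ext fun a => LinearMap.ext fun b => ?_
    simp only [sprod, LinearMap.mk₂_apply, LinearMap.add_apply, map_add]
    ring
  map_smul' c v := by
    refine LinearMap.ext fun a => LinearMap.ext fun b => ?_
    simp only [sprod, LinearMap.mk₂_apply, LinearMap.smul_apply, map_smul, smul_eq_mul,
      RingHom.id_apply]
    ring

/-- The conjugate form `ā` of a complex bilinear form `a` on `W`:
`ā(u,v) = conj (a(ū, v̄))`. -/
def conjForm (a : LinearMap.BilinForm ℂ (Cx V)) : LinearMap.BilinForm ℂ (Cx V) :=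
  LinearMap.mk₂ ℂ (fun u v => starRingEnd ℂ (a (conjW u) (conjW v)))
    (by intro u u' v; simp only [map_add, LinearMap.add_apply])
    (by intro c u v; simp only [conjW_smul, map_smul, LinearMap.smul_apply, smul_eq_mul,
          map_mul, Complex.conj_conj])
    (by intro u v v'; simp only [map_add])
    (by intro u c v; simp only [conjW_smul, map_smul, LinearMap.smul_apply, smul_eq_mul,
          map_mul, Complex.conj_conj])

/-- A Newman–Penrose tetrad `(k, n, m, m̄)` adapted to a nonzero null `k ∈ V`:
all the orthogonality relations of the tetrad. -/
def IsNPTetrad (g : LinearMap.BilinForm ℝ V) (k n : V) (m : Cx V) : Prop :=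
  gW g m (conjW m) = 1 ∧ gW g (ι k) (ι n) = -1 ∧
    gW g (ι k) (ι k) = 0 ∧ gW g (ι n) (ι n) = 0 ∧
    gW g m m = 0 ∧ gW g (conjW m) (conjW m) = 0 ∧
    gW g (ι k) m = 0 ∧ gW g (ι k) (conjW m) = 0 ∧
    gW g (ι n) m = 0 ∧ gW g (ι n) (conjW m) = 0

variable [FiniteDimensional ℝ V]

/-- The `g`-associated endomorphism `Ŝ` of a bilinear form `S` on `W`, characterized by
`g(Ŝ a, b) = S(a, b)` (defined when the extension of `g` to `W` is nondegenerate, which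
holds whenever `g` is nondegenerate). -/
def hatEnd (g : LinearMap.BilinForm ℝ V) (S : LinearMap.BilinForm ℂ (Cx V)) :
    Cx V →ₗ[ℂ] Cx V :=
  letI := Classical.dec ((gW g).Nondegenerate)
  if hnd : (gW g).Nondegenerate then ((gW g).toDual hnd).symm.toLinearMap ∘ₗ S else 0

/-- The metric trace `tr_g S` of a bilinear form `S` on `W`. -/
def trg (g : LinearMap.BilinForm ℝ V) (S : LinearMap.BilinForm ℂ (Cx V)) : ℂ :=
  LinearMap.trace ℂ (Cx V) (hatEnd g S)

/-- The full metric contraction `⟨A, B⟩ = tr (Â ∘ B̂)` of bilinear forms on `W`. -/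
def contr (g : LinearMap.BilinForm ℝ V) (A B : LinearMap.BilinForm ℂ (Cx V)) : ℂ :=
  LinearMap.trace ℂ (Cx V) (hatEnd g A ∘ₗ hatEnd g B)

/-- The value `D[k](S)(u,v)` of the symbol operator `D[k]` on a bilinear form `S`. -/
def Dval (g : LinearMap.BilinForm ℝ V) (k : V) (S : LinearMap.BilinForm ℂ (Cx V))
    (u v : Cx V) : ℂ :=
  (1 / 2 : ℂ) *
    (gW g (ι k) (ι k) * S u v - gW g (ι k) (ι k) * gW g u v * trg g S
      + gW g (ι k) u * gW g (ι k) v * trg g S + gW g u v * S (ι k) (ι k)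
      - gW g (ι k) u * S (ι k) v - gW g (ι k) v * S (ι k) u)

/-- The symbol operator `D[k]`, acting on bilinear forms on `W`. -/
def Dop (g : LinearMap.BilinForm ℝ V) (k : V) (S : LinearMap.BilinForm ℂ (Cx V)) :
    LinearMap.BilinForm ℂ (Cx V) :=
  LinearMap.mk₂ ℂ (fun u v => Dval g k S u v)
    (by intro u u' v; simp only [Dval, map_add, LinearMap.add_apply]; ring)
    (by intro c u v; simp only [Dval, map_smul, LinearMap.smul_apply, smul_eq_mul]; ring)
    (by intro u v v'; simp only [Dval, map_add, LinearMap.add_apply]; ring)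
    (by intro u c v; simp only [Dval, map_smul, LinearMap.smul_apply, smul_eq_mul]; ring)


lemma gW_ι_ι (g : LinearMap.BilinForm ℝ V) (u v : V) :
    gW g (ι u) (ι v) = (g u v : ℂ) := by
  simp [gW, ι, LinearMap.BilinForm.baseChange_tmul, Complex.real_smul]

lemma gW_nondeg (g : LinearMap.BilinForm ℝ V) (hg : g.Nondegenerate) :
    (gW g).Nondegenerate := by
  let b := Module.finBasis ℝ V
  rw [LinearMap.BilinForm.nondegenerate_iff_det_ne_zero (b.baseChange ℂ)]
  have hmat : LinearMap.BilinForm.toMatrix (b.baseChange ℂ) (gW g) =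
      (LinearMap.BilinForm.toMatrix b g).map (algebraMap ℝ ℂ) := by
    ext i j
    simp [LinearMap.BilinForm.toMatrix_apply, Basis.baseChange_apply, gW,
      LinearMap.BilinForm.baseChange_tmul, Complex.real_smul, Matrix.map_apply]
  rw [hmat, ← RingHom.mapMatrix_apply, ← RingHom.map_det]
  simpa using (LinearMap.BilinForm.nondegenerate_iff_det_ne_zero b).mp hg

lemma hatEnd_gW (g : LinearMap.BilinForm ℝ V) (hnd : (gW g).Nondegenerate) :
    hatEnd g (gW g) = LinearMap.id := by
  classical
  rw [hatEnd]
  simp only [dif_pos hnd]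
  refine LinearMap.ext fun u => ?_
  have h : ((gW g).toDual hnd).symm (gW g u) = u := by
    rw [LinearEquiv.symm_apply_eq]
    rfl
  simpa using h

lemma trg_gW (g : LinearMap.BilinForm ℝ V) (hdim : finrank ℝ V = 4)
    (hnd : (gW g).Nondegenerate) : trg g (gW g) = 4 := by
  rw [trg, hatEnd_gW g hnd, ← Module.End.one_eq_id, LinearMap.trace_one]
  rw [show finrank ℂ (Cx V) = 4 from (Module.finrank_baseChange).trans hdim]
  norm_num

lemma trg_smul (g : LinearMap.BilinForm ℝ V) (c : ℂ)
    (S : LinearMap.BilinForm ℂ (Cx V)) : trg g (c • S) = c * trg g S := by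
  classical
  have h : hatEnd g (c • S) = c • hatEnd g S := by
    rw [hatEnd, hatEnd]
    split
    · ext u; simp
    · simp
  rw [trg, trg, h, map_smul, smul_eq_mul]

lemma pure_gauge_zero (g : LinearMap.BilinForm ℝ V) (hdim : finrank ℝ V = 4)
    (hg : g.Nondegenerate) (S' : LinearMap.BilinForm ℂ (Cx V))
    (h : ∀ u v : Cx V, S' u v = (1 / 2 : ℂ) * gW g u v * trg g S') : S' = 0 := by
  have hnd := gW_nondeg g hg
  have hS' : S' = ((1 / 2 : ℂ) * trg g S') • gW g := by
    refine LinearMap.ext fun u => LinearMap.ext fun v => ?_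
    simp only [LinearMap.smul_apply, smul_eq_mul]
    rw [h u v]; ring
  have ht : trg g S' = 0 := by
    have h2 := congrArg (trg g) hS'
    rw [trg_smul, trg_gW g hdim hnd] at h2
    linear_combination -h2
  rw [hS', ht, mul_zero, zero_smul]

/-- A nonzero symmetric form in the Lorenz gauge that lies in the kernel of `D[k]`
forces `k` to be null; moreover, in dimension 4 the equation `S = (1/2) g tr_g S`
forces `S = 0`. -/
theorem statement_5 (g : LinearMap.BilinForm ℝ V) (hdim : finrank ℝ V = 4)
    (hg : g.Nondegenerate) (hsymm : g.IsSymm)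
    (k : V) (S : LinearMap.BilinForm ℂ (Cx V)) (hS : S.IsSymm) (hS0 : S ≠ 0)
    (hLorenz : ∀ v : Cx V, S (ι k) v = (1 / 2 : ℂ) * gW g (ι k) v * trg g S)
    (hker : ∀ u v : Cx V, Dval g k S u v = 0) :
    g k k = 0 ∧
      ∀ S' : LinearMap.BilinForm ℂ (Cx V),
        (∀ u v : Cx V, S' u v = (1 / 2 : ℂ) * gW g u v * trg g S') → S' = 0 := by
  refine ⟨?_, fun S' h => pure_gauge_zero g hdim hg S' h⟩
  by_contra hk
  have hc : gW g (ι k) (ι k) ≠ 0 := by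
    rw [gW_ι_ι]
    exact_mod_cast hk
  apply hS0
  apply pure_gauge_zero g hdim hg
  intro u v
  have h0 := hker u v
  rw [Dval, hLorenz v, hLorenz u, hLorenz (ι k)] at h0
  have h1 : gW g (ι k) (ι k) * (S u v - (1 / 2 : ℂ) * gW g u v * trg g S) = 0 := by
    linear_combination 2 * h0
  rcases mul_eq_zero.mp h1 with h | h
  · exact absurd h hc
  · linear_combination h

end
end

section
/- Let k ∈ V be a nonzero null vector and (n, m, m̄) a Newman–Penrose tetrad adapted to k. If S is a complex symmetric bilinear form on W with D[k](S) = 0, then S(k,k) = 0, S(k,m) = 0, S(k,m̄) = 0, S(m,m̄) = 0, and tr_g S = −2 S(k,n). -/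
open scoped TensorProduct
open Module

noncomputable section

variable {V : Type} [AddCommGroup V] [Module ℝ V]

variable [FiniteDimensional ℝ V]

lemma gW_symm (g : LinearMap.BilinForm ℝ V) (hsymm : g.IsSymm) (u v : Cx V) :
    gW g u v = gW g v u := by
  induction u using TensorProduct.induction_on with
  | zero => simp
  | tmul a x =>
    induction v using TensorProduct.induction_on with
    | zero => simp
    | tmul b y =>
        have := hsymm.eq x y
        simp [gW, this, mul_comm]
    | add p q hp hq => simp only [map_add, LinearMap.add_apply, hp, hq]
  | add p q hp hq => simp only [map_add, LinearMap.add_apply, hp, hq]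

/-- If `D[k](S) = 0` for a symmetric form `S`, then `S(k,k) = S(k,m) = S(k,m̄) =
S(m,m̄) = 0` and `tr_g S = −2 S(k,n)`. -/
theorem statement_8 (g : LinearMap.BilinForm ℝ V) (hdim : finrank ℝ V = 4)
    (hg : g.Nondegenerate) (hsymm : g.IsSymm)
    (k n : V) (m : Cx V) (hk : k ≠ 0) (hknull : g k k = 0)
    (htetrad : IsNPTetrad g k n m)
    (S : LinearMap.BilinForm ℂ (Cx V)) (hS : S.IsSymm)
    (hker : ∀ u v : Cx V, Dval g k S u v = 0) :
    S (ι k) (ι k) = 0 ∧ S (ι k) m = 0 ∧ S (ι k) (conjW m) = 0 ∧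
      S m (conjW m) = 0 ∧ trg g S = -2 * S (ι k) (ι n) := by
  obtain ⟨h1, h2, h3, h4, h5, h6, h7, h8, h9, h10⟩ := htetrad
  set v : Fin 4 → Cx V := ![ι k, ι n, m, conjW m] with hv
  have hsum : ∀ (c : Fin 4 → ℂ) (w : Cx V),
      gW g w (∑ i, c i • v i) = ∑ i, c i * gW g w (v i) := by
    intro c w
    rw [map_sum]
    exact Finset.sum_congr rfl fun i _ => by rw [map_smul, smul_eq_mul]
  -- pairings of w with each tetrad vector extract coefficients
  have hpair : ∀ (c : Fin 4 → ℂ),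
      gW g (ι n) (∑ i, c i • v i) = -c 0 ∧
      gW g (ι k) (∑ i, c i • v i) = -c 1 ∧
      gW g (conjW m) (∑ i, c i • v i) = c 2 ∧
      gW g m (∑ i, c i • v i) = c 3 := by
    intro c
    have e0 := hsum c (ι n)
    have e1 := hsum c (ι k)
    have e2 := hsum c (conjW m)
    have e3 := hsum c m
    simp only [Fin.sum_univ_four, hv, Matrix.cons_val_zero, Matrix.cons_val_one,
      Matrix.head_cons, Matrix.cons_val_two, Matrix.tail_cons,
      Matrix.cons_val_three] at e0 e1 e2 e3
    rw [gW_symm g hsymm (ι n) (ι k)] at e0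
    rw [gW_symm g hsymm (conjW m) (ι k), gW_symm g hsymm (conjW m) (ι n),
      gW_symm g hsymm (conjW m) m] at e2
    rw [gW_symm g hsymm m (ι k), gW_symm g hsymm m (ι n)] at e3
    rw [h2, h4, h9, h10] at e0
    rw [h3, h2, h7, h8] at e1
    rw [h8, h10, h1, h6] at e2
    rw [h7, h9, h5, h1] at e3
    refine ⟨?_, ?_, ?_, ?_⟩ <;>
      simp only [Fin.sum_univ_four, hv, Matrix.cons_val_zero, Matrix.cons_val_one,
        Matrix.head_cons, Matrix.cons_val_two, Matrix.tail_cons, Matrix.cons_val_three] <;>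
      [rw [e0]; rw [e1]; rw [e2]; rw [e3]] <;> ring
  have hli : LinearIndependent ℂ v := by
    rw [Fintype.linearIndependent_iff]
    intro c hc
    obtain ⟨e0, e1, e2, e3⟩ := hpair c
    rw [hc] at e0 e1 e2 e3
    simp only [map_zero] at e0 e1 e2 e3
    intro i
    fin_cases i
    · exact neg_eq_zero.mp e0.symm
    · exact neg_eq_zero.mp e1.symm
    · exact e2.symm
    · exact e3.symm
  have hcard : Fintype.card (Fin 4) = finrank ℂ (Cx V) := by
    rw [Module.finrank_baseChange, hdim, Fintype.card_fin]
  let b : Basis (Fin 4) ℂ (Cx V) := basisOfLinearIndependentOfCardEqFinrank hli hcard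
  have hb : ∀ i, b i = v i := fun i => by
    rw [show b = basisOfLinearIndependentOfCardEqFinrank hli hcard from rfl,
      coe_basisOfLinearIndependentOfCardEqFinrank]
  -- coefficients of any u via pairings
  have hcoef : ∀ u : Cx V,
      gW g (ι n) u = -(b.repr u 0) ∧ gW g (ι k) u = -(b.repr u 1) ∧
      gW g (conjW m) u = b.repr u 2 ∧ gW g m u = b.repr u 3 := by
    intro u
    have hu : u = ∑ i, b.repr u i • v i := by
      conv_lhs => rw [← b.sum_repr u]
      exact Finset.sum_congr rfl fun i _ => by rw [hb]
    obtain ⟨e0, e1, e2, e3⟩ := hpair (b.repr u)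
    rw [← hu] at e0 e1 e2 e3
    exact ⟨e0, e1, e2, e3⟩
  -- nondegeneracy of gW g
  have hnd : (gW g).Nondegenerate := by
    have hL : LinearMap.SeparatingLeft (gW g) := by
      intro u hu
      obtain ⟨e0, e1, e2, e3⟩ := hcoef u
      rw [gW_symm g hsymm (ι n) u, hu] at e0
      rw [gW_symm g hsymm (ι k) u, hu] at e1
      rw [gW_symm g hsymm (conjW m) u, hu] at e2
      rw [gW_symm g hsymm m u, hu] at e3
      have : b.repr u = 0 := by
        ext i
        fin_cases i
        · simpa using e0.symm
        · simpa using e1.symm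
        · exact e2.symm
        · exact e3.symm
      have := congrArg b.repr.symm this
      simpa using this
    exact ⟨hL, fun u hu => hL u fun y => by rw [gW_symm g hsymm u y]; exact hu y⟩
  -- key property of hatEnd
  have hhat : ∀ (a w : Cx V), gW g (hatEnd g S a) w = S a w := by
    intro a w
    rw [hatEnd, dif_pos hnd]
    exact LinearMap.BilinForm.apply_toDual_symm_apply (hB := hnd) (S a) w
  -- trace formula
  have htr : trg g S = -S (ι k) (ι n) - S (ι n) (ι k) + S m (conjW m)
      + S (conjW m) m := by
    have := LinearMap.trace_eq_matrix_trace ℂ b (hatEnd g S)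
    rw [trg, this, Matrix.trace]
    have hdiag : ∀ i, (LinearMap.toMatrix b b (hatEnd g S)) i i
        = b.repr (hatEnd g S (b i)) i := fun i => LinearMap.toMatrix_apply b b _ i i
    rw [Fin.sum_univ_four]
    simp only [Matrix.diag_apply, hdiag]
    obtain ⟨e0, -, -, -⟩ := hcoef (hatEnd g S (b 0))
    obtain ⟨-, e1, -, -⟩ := hcoef (hatEnd g S (b 1))
    obtain ⟨-, -, e2, -⟩ := hcoef (hatEnd g S (b 2))
    obtain ⟨-, -, -, e3⟩ := hcoef (hatEnd g S (b 3))
    rw [gW_symm g hsymm (ι n) _, hhat] at e0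
    rw [gW_symm g hsymm (ι k) _, hhat] at e1
    rw [gW_symm g hsymm (conjW m) _, hhat] at e2
    rw [gW_symm g hsymm m _, hhat] at e3
    have hb0 : b 0 = ι k := by rw [hb]; rfl
    have hb1 : b 1 = ι n := by rw [hb]; rfl
    have hb2 : b 2 = m := by rw [hb]; rfl
    have hb3 : b 3 = conjW m := by rw [hb]; rfl
    rw [hb0, hb1, hb2, hb3]
    rw [hb0] at e0
    rw [hb1] at e1
    rw [hb2] at e2
    rw [hb3] at e3
    linear_combination e0 + e1 - e2 - e3
  have hSkk : S (ι k) (ι k) = 0 := by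
    have ha := hker m (conjW m)
    simp only [Dval, h3, h7, h8, h1] at ha
    linear_combination 2 * ha
  have hSkm : S (ι k) m = 0 := by
    have hb' := hker (ι n) m
    simp only [Dval, h3, h2, h9, h7] at hb'
    linear_combination 2 * hb'
  have hSkmb : S (ι k) (conjW m) = 0 := by
    have hc := hker (ι n) (conjW m)
    simp only [Dval, h3, h2, h10, h8] at hc
    linear_combination 2 * hc
  have htrS : trg g S = -2 * S (ι k) (ι n) := by
    have hd := hker (ι n) (ι n)
    simp only [Dval, h3, h2, h4] at hd
    linear_combination 2 * hd
  have hSmm : S m (conjW m) = 0 := by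
    have hS1 := hS.eq (ι k) (ι n)
    have hS2 := hS.eq m (conjW m)
    linear_combination (-1/2 : ℂ) * htr + (1/2 : ℂ) * htrS
      + (-1/2 : ℂ) * hS1 + (1/2 : ℂ) * hS2
  exact ⟨hSkk, hSkm, hSkmb, hSmm, htrS⟩


end
end
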